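/- Let h be a concave function with derivative h'(z) = φ(F_Z(z)) wherever differentiable, where φ is a non-increasing risk spectrum. Then for each u ∈ (0,1), the infimum in the concave conjugate ĥ(φ(u)) = inf_z (φ(u)·z − h(z)) is attained at z = F_Z^{-1}(u), and consequently ∫₀¹ ĥ(φ(u)) du = SRM_φ(Z) − E[h(Z)]. -/

import Mathlib

open MeasureTheory Set Filter

noncomputable section

private lemma concave_loclip {h : ℝ → ℝ} (hconc : ConcaveOn ℝ Set.univ h) (x : ℝ) :
    ∃ g : ℝ → ℝ, (∃ K : NNReal, LipschitzWith K g) ∧ Set.EqOn h g (Metric.ball x 1) := by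
  set m := min (h (x - 3)) (h (x + 3)) with hm
  have hseg : ∀ y : ℝ, dist y x ≤ 3 → m ≤ h y := by
    intro y hy
    have hmem : y ∈ Set.Icc (x - 3) (x + 3) := by
      rw [Real.dist_eq, abs_le] at hy
      constructor <;> linarith [hy.1, hy.2]
    exact hconc.ge_on_segment (Set.mem_univ _) (Set.mem_univ _)
      (by rwa [segment_eq_Icc (by linarith : x - 3 ≤ x + 3)])
  have hM : ∀ a, dist a x < 3 → |h a| ≤ |2 * h x| + 2 * |m| := by
    intro a ha
    have h1 : m ≤ h a := hseg a ha.le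
    have h2 : m ≤ h (2 * x - a) := by
      refine hseg _ ?_
      rw [Real.dist_eq] at ha ⊢
      rw [show 2 * x - a - x = -(a - x) by ring, abs_neg]
      exact ha.le
    have h3 : (1/2 : ℝ) • h a + (1/2 : ℝ) • h (2 * x - a) ≤
        h ((1/2 : ℝ) • a + (1/2 : ℝ) • (2 * x - a)) :=
      hconc.2 (Set.mem_univ _) (Set.mem_univ _) (by norm_num) (by norm_num) (by norm_num)
    have h4 : (1/2 : ℝ) • a + (1/2 : ℝ) • (2 * x - a) = x := by
      simp only [smul_eq_mul]; ring
    rw [h4] at h3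
    simp only [smul_eq_mul] at h3
    rw [abs_le]
    constructor
    · have := abs_nonneg (2 * h x); have := neg_abs_le m; have := abs_nonneg m; linarith
    · have := le_abs_self (2 * h x); have := neg_abs_le m; have := abs_nonneg m; linarith
  have hsub : ConcaveOn ℝ (Metric.ball x 3) h :=
    hconc.subset (Set.subset_univ _) (convex_ball x 3)
  have hlip := hsub.lipschitzOnWith_of_abs_le (by norm_num : (0:ℝ) < 2) hM
  rw [show (3:ℝ) - 2 = 1 by norm_num] at hlip
  obtain ⟨g, hg, heq⟩ := hlip.extend_real
  exact ⟨g, ⟨_, hg⟩, heq⟩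

private lemma concave_cont {h : ℝ → ℝ} (hconc : ConcaveOn ℝ Set.univ h) : Continuous h := by
  rw [continuous_iff_continuousAt]
  intro x
  obtain ⟨g, ⟨K, hK⟩, heq⟩ := concave_loclip hconc x
  have hev : h =ᶠ[nhds x] g :=
    Filter.eventuallyEq_of_mem (Metric.ball_mem_nhds x one_pos) heq
  exact hK.continuous.continuousAt.congr hev.symm

private lemma concave_dense_diff {h : ℝ → ℝ} (hconc : ConcaveOn ℝ Set.univ h) :
    ∀ a b : ℝ, a < b → ∃ s, a < s ∧ s < b ∧ DifferentiableAt ℝ h s := by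
  intro a b hab
  set c := min b (a + 1) with hc
  have hac : a < c := lt_min hab (by linarith)
  have hcb : c ≤ b := min_le_left _ _
  have hca : c - a ≤ 1 := by
    have := min_le_right b (a + 1); simp only [hc]; linarith
  set m := (a + c) / 2 with hm
  have hsub : Set.Ioo a c ⊆ Metric.ball m 1 := by
    intro y hy
    rw [Metric.mem_ball, Real.dist_eq, abs_lt]
    constructor
    · simp only [hm]; linarith [hy.1]
    · simp only [hm]; linarith [hy.2]
  obtain ⟨g, ⟨K, hK⟩, heq⟩ := concave_loclip hconc m
  have hae : ∀ᵐ x ∂(volume : Measure ℝ), DifferentiableAt ℝ g x := hK.ae_differentiableAt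
  have hne : (volume.restrict (Set.Ioo a c)) ≠ 0 := by
    rw [Ne, Measure.restrict_eq_zero, Real.volume_Ioo]
    simp only [ENNReal.ofReal_eq_zero, not_le]
    linarith
  haveI : NeBot (ae (volume.restrict (Set.Ioo a c))) := ae_neBot.mpr hne
  have hex : ∃ s, DifferentiableAt ℝ g s ∧ s ∈ Set.Ioo a c := by
    have h1 := ae_restrict_of_ae (s := Set.Ioo a c) hae
    have h2 := ae_restrict_mem (μ := volume) (measurableSet_Ioo (a := a) (b := c))
    exact (h1.and h2).exists
  obtain ⟨s, hgs, hsIoo⟩ := hex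
  refine ⟨s, hsIoo.1, lt_of_lt_of_le hsIoo.2 hcb, ?_⟩
  have hev : h =ᶠ[nhds s] g :=
    Filter.eventuallyEq_of_mem (Metric.isOpen_ball.mem_nhds (hsub hsIoo)) heq
  exact hev.differentiableAt_iff.mpr hgs

private lemma concave_upper {h : ℝ → ℝ} (hconc : ConcaveOn ℝ Set.univ h)
    {c x z : ℝ} (hxz : x < z)
    (hc : ∀ t, x < t → t < z → DifferentiableAt ℝ h t → deriv h t ≤ c) :
    h z - h x ≤ c * (z - x) := by
  have hcont := concave_cont hconc
  refine le_of_forall_pos_le_add fun ε hε => ?_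
  obtain ⟨δ, hδ0, hδ⟩ : ∃ δ > 0, ∀ s, |s - x| < δ → |h s - h x| < ε / 2 := by
    have := Metric.continuousAt_iff.mp (hcont.continuousAt (x := x)) (ε / 2) (by linarith)
    obtain ⟨δ, hδ0, hδ⟩ := this
    exact ⟨δ, hδ0, fun s hs => by
      have := hδ (show dist s x < δ by rwa [Real.dist_eq]); rwa [Real.dist_eq] at this⟩
  set δ' := min δ (ε / (2 * (|c| + 1))) with hδ'
  have hδ'0 : 0 < δ' := lt_min hδ0 (by positivity)
  obtain ⟨s, hs1, hs2, hsd⟩ :=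
    concave_dense_diff hconc x (min z (x + δ')) (lt_min hxz (by linarith))
  have hsz : s < z := lt_of_lt_of_le hs2 (min_le_left _ _)
  have hsx : s - x < δ' := by
    have := lt_of_lt_of_le hs2 (min_le_right _ _); linarith
  have hslope : slope h s z ≤ deriv h s :=
    hconc.slope_le_deriv (Set.mem_univ s) (Set.mem_univ z) hsz hsd
  rw [slope_def_field, div_le_iff₀ (by linarith : (0:ℝ) < z - s)] at hslope
  have h2 : deriv h s ≤ c := hc s hs1 hsz hsd
  have h3 : h z - h s ≤ c * (z - s) :=
    le_trans hslope (mul_le_mul_of_nonneg_right h2 (by linarith))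
  have h4 : |h s - h x| < ε / 2 := hδ s (by
    rw [abs_of_pos (by linarith : (0:ℝ) < s - x)]
    exact lt_of_lt_of_le hsx (min_le_left _ _))
  have h5 : |c * (x - s)| ≤ ε / 2 := by
    rw [abs_mul]
    have hxs : |x - s| ≤ δ' := by
      rw [abs_sub_comm, abs_of_pos (by linarith : (0:ℝ) < s - x)]; linarith
    calc |c| * |x - s| ≤ |c| * δ' := by
          exact mul_le_mul_of_nonneg_left hxs (abs_nonneg c)
      _ ≤ (|c| + 1) * (ε / (2 * (|c| + 1))) := by
          apply mul_le_mul (by linarith) (min_le_right _ _) (le_of_lt hδ'0) (by positivity)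
      _ = ε / 2 := by
          field_simp
  have h6 := abs_lt.mp h4
  have h7 := abs_le.mp h5
  have h8 : c * (z - s) = c * (z - x) + c * (x - s) := by ring
  linarith [h6.1, h6.2, h7.1, h7.2]

private lemma concave_lower {h : ℝ → ℝ} (hconc : ConcaveOn ℝ Set.univ h)
    {c z x : ℝ} (hzx : z < x)
    (hc : ∀ t, z < t → t < x → DifferentiableAt ℝ h t → c ≤ deriv h t) :
    c * (x - z) ≤ h x - h z := by
  have hcont := concave_cont hconc
  refine le_of_forall_pos_le_add fun ε hε => ?_
  obtain ⟨δ, hδ0, hδ⟩ : ∃ δ > 0, ∀ s, |s - x| < δ → |h s - h x| < ε / 2 := by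
    have := Metric.continuousAt_iff.mp (hcont.continuousAt (x := x)) (ε / 2) (by linarith)
    obtain ⟨δ, hδ0, hδ⟩ := this
    exact ⟨δ, hδ0, fun s hs => by
      have := hδ (show dist s x < δ by rwa [Real.dist_eq]); rwa [Real.dist_eq] at this⟩
  set δ' := min δ (ε / (2 * (|c| + 1))) with hδ'
  have hδ'0 : 0 < δ' := lt_min hδ0 (by positivity)
  obtain ⟨s, hs1, hs2, hsd⟩ :=
    concave_dense_diff hconc (max z (x - δ')) x (max_lt hzx (by linarith))
  have hzs : z < s := lt_of_le_of_lt (le_max_left _ _) hs1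
  have hxs : x - s < δ' := by
    have := lt_of_le_of_lt (le_max_right _ _) hs1; linarith
  have hslope : deriv h s ≤ slope h z s :=
    hconc.deriv_le_slope (Set.mem_univ z) (Set.mem_univ s) hzs hsd
  rw [slope_def_field, le_div_iff₀ (by linarith : (0:ℝ) < s - z)] at hslope
  have h2 : c ≤ deriv h s := hc s hzs hs2 hsd
  have h3 : c * (s - z) ≤ h s - h z :=
    le_trans (mul_le_mul_of_nonneg_right h2 (by linarith)) hslope
  have h4 : |h s - h x| < ε / 2 := hδ s (by
    rw [abs_sub_comm, abs_of_pos (by linarith : (0:ℝ) < x - s)]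
    exact lt_of_lt_of_le hxs (min_le_left _ _))
  have h5 : |c * (x - s)| ≤ ε / 2 := by
    rw [abs_mul]
    have hxs' : |x - s| ≤ δ' := by
      rw [abs_of_pos (by linarith : (0:ℝ) < x - s)]; linarith
    calc |c| * |x - s| ≤ |c| * δ' := by
          exact mul_le_mul_of_nonneg_left hxs' (abs_nonneg c)
      _ ≤ (|c| + 1) * (ε / (2 * (|c| + 1))) := by
          apply mul_le_mul (by linarith) (min_le_right _ _) (le_of_lt hδ'0) (by positivity)
      _ = ε / 2 := by field_simp
  have h6 := abs_lt.mp h4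
  have h7 := abs_le.mp h5
  have h8 : c * (x - z) = c * (s - z) + c * (x - s) := by ring
  linarith [h6.1, h6.2, h7.1, h7.2]

/-- Concave conjugate attainment: if h is concave with h'(z) = φ(F_Z(z)) wherever
differentiable (φ a non-increasing non-negative spectrum), then for u ∈ (0,1) the
infimum in ĥ(φ(u)) = inf_z (φ(u)·z − h(z)) is attained at z = F_Z⁻¹(u), and
∫₀¹ ĥ(φ(u)) du = SRM_φ(Z) − E[h(Z)]. -/
theorem stmt16 {Ω : Type*} [MeasurableSpace Ω] (P : Measure Ω) [IsProbabilityMeasure P]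
    (Z : Ω → ℝ) (hZm : Measurable Z) (hZ : Integrable Z P)
    (F : ℝ → ℝ) (hF : ∀ z, F z = (P {ω | Z ω ≤ z}).toReal)
    (q : ℝ → ℝ) (hq : ∀ u, q u = sInf {z | u ≤ F z})
    (φ : ℝ → ℝ)
    (hφpos : ∀ u ∈ Set.Icc (0:ℝ) 1, 0 ≤ φ u)
    (hφanti : AntitoneOn φ (Set.Icc (0:ℝ) 1))
    (h : ℝ → ℝ) (hconc : ConcaveOn ℝ Set.univ h)
    (hderiv : ∀ z, DifferentiableAt ℝ h z → deriv h z = φ (F z))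
    (SRM : ℝ) (hSRM : SRM = ∫ u in Set.Ioc (0:ℝ) 1, q u * φ u) :
    (∀ u ∈ Set.Ioo (0:ℝ) 1, (⨅ z : ℝ, (φ u * z - h z)) = φ u * q u - h (q u))
    ∧ (∫ u in Set.Ioc (0:ℝ) 1, (φ u * q u - h (q u))) = SRM - ∫ ω, h (Z ω) ∂P := by
  classical
  set μ := P.map Z with hμdef
  haveI hμP : IsProbabilityMeasure μ := Measure.isProbabilityMeasure_map hZm.aemeasurable
  have hFeq : F = fun z => ProbabilityTheory.cdf μ z := by
    funext z
    rw [hF, ProbabilityTheory.cdf_eq_real, measureReal_def, hμdef, Measure.map_apply hZm measurableSet_Iic]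
    rfl
  have hF0 : ∀ z, 0 ≤ F z := fun z => by rw [hFeq]; exact ProbabilityTheory.cdf_nonneg μ z
  have hF1 : ∀ z, F z ≤ 1 := fun z => by rw [hFeq]; exact ProbabilityTheory.cdf_le_one μ z
  have hFmono : Monotone F := by rw [hFeq]; exact ProbabilityTheory.monotone_cdf μ
  have hFIcc : ∀ z, F z ∈ Set.Icc (0:ℝ) 1 := fun z => ⟨hF0 z, hF1 z⟩
  have hne : ∀ u : ℝ, u < 1 → {z | u ≤ F z}.Nonempty := by
    intro u hu
    have htop : Tendsto F atTop (nhds 1) := by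
      rw [hFeq]; exact ProbabilityTheory.tendsto_cdf_atTop μ
    obtain ⟨z, hz⟩ := (htop.eventually (eventually_gt_nhds hu)).exists
    exact ⟨z, le_of_lt hz⟩
  have hbdd : ∀ u : ℝ, 0 < u → BddBelow {z | u ≤ F z} := by
    intro u hu
    have hbot : Tendsto F atBot (nhds 0) := by
      rw [hFeq]; exact ProbabilityTheory.tendsto_cdf_atBot μ
    obtain ⟨z₀, hz₀⟩ := (hbot.eventually (eventually_lt_nhds hu)).exists
    refine ⟨z₀, fun z hz => ?_⟩
    by_contra hlt
    push_neg at hlt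
    exact absurd hz (not_le.mpr (lt_of_le_of_lt (hFmono hlt.le) hz₀))
  have galois : ∀ u ∈ Set.Ioo (0:ℝ) 1, ∀ z, q u ≤ z ↔ u ≤ F z := by
    rintro u ⟨hu0, hu1⟩ z
    constructor
    · intro hle
      have hle' : sInf {z | u ≤ F z} ≤ z := by rw [← hq]; exact hle
      have hev : ∀ x, z < x → u ≤ F x := by
        intro x hx
        have hlt : sInf {z | u ≤ F z} < x := lt_of_le_of_lt hle' hx
        obtain ⟨w, hw, hwx⟩ := (csInf_lt_iff (hbdd u hu0) (hne u hu1)).mp hlt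
        exact le_trans hw (hFmono hwx.le)
      have htend : Tendsto F (nhdsWithin z (Set.Ioi z)) (nhds (F z)) := by
        have hrc : ContinuousWithinAt F (Set.Ici z) z := by
          rw [hFeq]; exact (ProbabilityTheory.cdf μ).right_continuous z
        exact hrc.mono_left (nhdsWithin_mono z Set.Ioi_subset_Ici_self)
      exact ge_of_tendsto htend (eventually_nhdsWithin_of_forall (fun x hx => hev x hx))
    · intro hz
      rw [hq]
      exact csInf_le (hbdd u hu0) hz
  have hFq : ∀ u ∈ Set.Ioo (0:ℝ) 1, u ≤ F (q u) := fun u hu => (galois u hu (q u)).mp le_rfl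
  have hqmono : MonotoneOn q (Set.Ioo (0:ℝ) 1) := by
    intro u hu v hv huv
    exact (galois u hu (q v)).mpr (le_trans huv (hFq v hv))
  have hlow : ∀ u ∈ Set.Ioo (0:ℝ) 1, ∀ z : ℝ, φ u * q u - h (q u) ≤ φ u * z - h z := by
    rintro u hu z
    have huIcc : u ∈ Set.Icc (0:ℝ) 1 := ⟨hu.1.le, hu.2.le⟩
    rcases lt_trichotomy z (q u) with hz | hz | hz
    · have hc : ∀ t, z < t → t < q u → DifferentiableAt ℝ h t → φ u ≤ deriv h t := by
        intro t ht1 ht2 htd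
        rw [hderiv t htd]
        have hFt : F t < u := by
          by_contra hge
          push_neg at hge
          exact absurd ((galois u hu t).mpr hge) (not_le.mpr ht2)
        exact hφanti (hFIcc t) huIcc hFt.le
      have hmain := concave_lower hconc hz hc
      have hexp : φ u * (q u - z) = φ u * q u - φ u * z := by ring
      linarith
    · rw [hz]
    · have hc : ∀ t, q u < t → t < z → DifferentiableAt ℝ h t → deriv h t ≤ φ u := by
        intro t ht1 ht2 htd
        rw [hderiv t htd]
        exact hφanti huIcc (hFIcc t) ((galois u hu t).mp ht1.le)
      have hmain := concave_upper hconc hz hc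
      have hexp : φ u * (z - q u) = φ u * z - φ u * q u := by ring
      linarith
  have part1 : ∀ u ∈ Set.Ioo (0:ℝ) 1,
      (⨅ z : ℝ, (φ u * z - h z)) = φ u * q u - h (q u) := by
    intro u hu
    refine le_antisymm ?_ (le_ciInf (hlow u hu))
    exact ciInf_le ⟨φ u * q u - h (q u), by rintro y ⟨z, rfl⟩; exact hlow u hu z⟩ (q u)
  have hqm : AEMeasurable q (volume.restrict (Set.Ioo (0:ℝ) 1)) :=
    aemeasurable_restrict_of_monotoneOn measurableSet_Ioo hqmono
  have hrest : volume.restrict (Set.Ioo (0:ℝ) 1) = volume.restrict (Set.Ioc (0:ℝ) 1) :=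
    Measure.restrict_congr_set Ioo_ae_eq_Ioc
  have hνμ : (volume.restrict (Set.Ioo (0:ℝ) 1)).map q = μ := by
    haveI hfin : IsProbabilityMeasure ((volume.restrict (Set.Ioo (0:ℝ) 1)).map q) := by
      constructor
      rw [Measure.map_apply_of_aemeasurable hqm MeasurableSet.univ, Set.preimage_univ,
        Measure.restrict_apply_univ, Real.volume_Ioo]
      norm_num
    refine Measure.ext_of_Iic _ _ fun z => ?_
    rw [Measure.map_apply_of_aemeasurable hqm measurableSet_Iic,
      Measure.restrict_apply' measurableSet_Ioo]
    have hset : q ⁻¹' Set.Iic z ∩ Set.Ioo 0 1 = Set.Ioo (0:ℝ) 1 ∩ Set.Iic (F z) := by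
      ext u
      constructor
      · rintro ⟨h1, h2⟩
        exact ⟨h2, (galois u h2 z).mp h1⟩
      · rintro ⟨h2, h1⟩
        exact ⟨(galois u h2 z).mpr h1, h2⟩
    rw [hset]
    have hRHS : μ (Set.Iic z) = ENNReal.ofReal (F z) := by
      rw [hFeq]; exact (ProbabilityTheory.ofReal_cdf μ z).symm
    rw [hRHS]
    rcases lt_or_ge (F z) 1 with hFz | hFz
    · have hinter : Set.Ioo (0:ℝ) 1 ∩ Set.Iic (F z) = Set.Ioc (0:ℝ) (F z) := by
        ext u
        simp only [Set.mem_inter_iff, Set.mem_Ioo, Set.mem_Iic, Set.mem_Ioc]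
        exact ⟨fun hmem => ⟨hmem.1.1, hmem.2⟩,
          fun hmem => ⟨⟨hmem.1, lt_of_le_of_lt hmem.2 hFz⟩, hmem.2⟩⟩
      rw [hinter, Real.volume_Ioc, sub_zero]
    · have hFz1 : F z = 1 := le_antisymm (hF1 z) hFz
      have hinter : Set.Ioo (0:ℝ) 1 ∩ Set.Iic (F z) = Set.Ioo (0:ℝ) 1 := by
        rw [Set.inter_eq_left]
        intro u hu
        rw [Set.mem_Iic, hFz1]
        exact le_of_lt hu.2
      rw [hinter, Real.volume_Ioo, hFz1]
      norm_num
  have hφ0 : 0 ≤ φ 0 := hφpos 0 ⟨le_rfl, zero_le_one⟩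
  have hderle : ∀ t : ℝ, DifferentiableAt ℝ h t → deriv h t ≤ φ 0 := fun t htd => by
    rw [hderiv t htd]; exact hφanti ⟨le_rfl, zero_le_one⟩ (hFIcc t) (hF0 t)
  have hderge : ∀ t : ℝ, DifferentiableAt ℝ h t → (0:ℝ) ≤ deriv h t := fun t htd => by
    rw [hderiv t htd]; exact hφpos _ (hFIcc t)
  have hgrow : ∀ x : ℝ, |h x| ≤ |h 0| + φ 0 * |x| := by
    intro x
    rcases lt_trichotomy x 0 with hx | hx | hx
    · have h1 := concave_upper hconc hx (fun t _ _ htd => hderle t htd)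
      have h2 := concave_lower hconc hx (fun t _ _ htd => hderge t htd)
      rw [abs_of_neg hx, abs_le]
      have e1 : φ 0 * (0 - x) = -(φ 0 * x) := by ring
      have e2 : (0:ℝ) * (0 - x) = 0 := by ring
      constructor
      · have := neg_abs_le (h 0)
        have hφx : φ 0 * -x = -(φ 0 * x) := by ring
        linarith
      · have := le_abs_self (h 0)
        have hφx : φ 0 * -x = -(φ 0 * x) := by ring
        nlinarith
    · rw [hx]
      simp [hφ0]
    · have h1 := concave_upper hconc hx (fun t _ _ htd => hderle t htd)
      have h2 := concave_lower hconc hx (fun t _ _ htd => hderge t htd)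
      rw [abs_of_pos hx, abs_le]
      have e1 : φ 0 * (x - 0) = φ 0 * x := by ring
      have e2 : (0:ℝ) * (x - 0) = 0 := by ring
      constructor
      · have := neg_abs_le (h 0)
        nlinarith
      · have := le_abs_self (h 0)
        linarith
  have hcont : Continuous h := concave_cont hconc
  have hIhZ : Integrable (fun ω => h (Z ω)) P := by
    refine Integrable.mono' ((integrable_const |h 0|).add (hZ.abs.const_mul (φ 0)))
      ((hcont.measurable.comp hZm).aestronglyMeasurable) ?_
    exact ae_of_all _ fun ω => by simpa [Real.norm_eq_abs] using hgrow (Z ω)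
  have hIid : Integrable (id : ℝ → ℝ) μ := by
    rw [hμdef, integrable_map_measure aestronglyMeasurable_id hZm.aemeasurable]
    simpa [Function.comp] using hZ
  have hIq : Integrable q (volume.restrict (Set.Ioo (0:ℝ) 1)) := by
    have hmap : Integrable (id : ℝ → ℝ) ((volume.restrict (Set.Ioo (0:ℝ) 1)).map q) := by
      rw [hνμ]; exact hIid
    rw [integrable_map_measure aestronglyMeasurable_id hqm] at hmap
    simpa [Function.comp] using hmap
  have hIh : Integrable h μ := by
    rw [hμdef, integrable_map_measure hcont.aestronglyMeasurable hZm.aemeasurable]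
    exact hIhZ
  have hIhq : Integrable (fun u => h (q u)) (volume.restrict (Set.Ioo (0:ℝ) 1)) := by
    have hmap : Integrable h ((volume.restrict (Set.Ioo (0:ℝ) 1)).map q) := by
      rw [hνμ]; exact hIh
    rw [integrable_map_measure hcont.aestronglyMeasurable hqm] at hmap
    exact hmap
  have hIqc : Integrable q (volume.restrict (Set.Ioc (0:ℝ) 1)) := by rwa [← hrest]
  have hqmc : AEMeasurable q (volume.restrict (Set.Ioc (0:ℝ) 1)) := by rwa [← hrest]
  have hφm : AEMeasurable φ (volume.restrict (Set.Ioc (0:ℝ) 1)) :=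
    aemeasurable_restrict_of_antitoneOn measurableSet_Ioc (hφanti.mono Set.Ioc_subset_Icc_self)
  have hIφq : Integrable (fun u => φ u * q u) (volume.restrict (Set.Ioc (0:ℝ) 1)) := by
    refine Integrable.mono' (hIqc.abs.const_mul (φ 0))
      ((hφm.mul hqmc).aestronglyMeasurable) ?_
    refine (ae_restrict_iff' measurableSet_Ioc).mpr (ae_of_all _ fun u hu => ?_)
    have h1 : 0 ≤ φ u := hφpos u ⟨hu.1.le, hu.2⟩
    have h2 : φ u ≤ φ 0 := hφanti ⟨le_rfl, zero_le_one⟩ ⟨hu.1.le, hu.2⟩ hu.1.le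
    rw [Real.norm_eq_abs, abs_mul, abs_of_nonneg h1]
    exact mul_le_mul_of_nonneg_right h2 (abs_nonneg _)
  have hIhqc : Integrable (fun u => h (q u)) (volume.restrict (Set.Ioc (0:ℝ) 1)) := by
    rwa [← hrest]
  have hint_h : ∫ u in Set.Ioc (0:ℝ) 1, h (q u) = ∫ ω, h (Z ω) ∂P := by
    have h1 : ∫ u in Set.Ioo (0:ℝ) 1, h (q u)
        = ∫ x, h x ∂((volume.restrict (Set.Ioo (0:ℝ) 1)).map q) :=
      (integral_map hqm (by rw [hνμ]; exact hcont.aestronglyMeasurable)).symm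
    have h2 : ∫ x, h x ∂μ = ∫ ω, h (Z ω) ∂P := by
      rw [hμdef]; exact integral_map hZm.aemeasurable hcont.aestronglyMeasurable
    calc ∫ u in Set.Ioc (0:ℝ) 1, h (q u) = ∫ u in Set.Ioo (0:ℝ) 1, h (q u) := by rw [hrest]
      _ = ∫ ω, h (Z ω) ∂P := by rw [h1, hνμ, h2]
  refine ⟨part1, ?_⟩
  rw [integral_sub hIφq hIhqc, hint_h, hSRM]
  congr 1
  exact integral_congr_ae (ae_of_all _ fun u => mul_comm (φ u) (q u))
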